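/- Under the same setup (p supported on two indices i₁, i₂ with positive components summing to 1), γ(p) + γ(Tp) = λ_{i₁} + λ_{i₂}. -/

import Mathlib

open Finset

noncomputable def gam {n : ℕ} (lam : Fin (n+1) → ℝ) (Psi : ℝ → ℝ) (p : Fin (n+1) → ℝ) : ℝ :=
  (∑ i, Psi (lam i) * lam i * p i) / (∑ i, Psi (lam i) * p i)

noncomputable def Tmap {n : ℕ} (lam : Fin (n+1) → ℝ) (Psi : ℝ → ℝ) (p : Fin (n+1) → ℝ) :
    Fin (n+1) → ℝ :=
  fun i => (lam i - gam lam Psi p) ^ 2 * p i / ∑ j, (lam j - gam lam Psi p) ^ 2 * p j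

noncomputable def Theta {n : ℕ} (lam : Fin (n+1) → ℝ) (Psi : ℝ → ℝ) (p : Fin (n+1) → ℝ) : ℝ :=
  (∑ i, Psi (lam i) * (lam i - gam lam Psi p) ^ 2 * p i) / (∑ i, Psi (lam i) * p i)

lemma sum_two_aux {n : ℕ} {i₁ i₂ : Fin (n+1)} (hne : i₁ ≠ i₂) (g : Fin (n+1) → ℝ)
    (hg : ∀ i, i ≠ i₁ → i ≠ i₂ → g i = 0) :
    ∑ i, g i = g i₁ + g i₂ := by
  rw [← Finset.sum_pair hne]
  refine (Finset.sum_subset (Finset.subset_univ _) ?_).symm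
  intro x _ hx
  simp only [Finset.mem_insert, Finset.mem_singleton, not_or] at hx
  exact hg x hx.1 hx.2

theorem gam_add_gam_Tmap {n : ℕ} (lam : Fin (n+1) → ℝ) (Psi : ℝ → ℝ) (p : Fin (n+1) → ℝ)
    (hmono : StrictMono lam) (hpos : 0 < lam 0)
    (hPsi : ∀ x ∈ Set.Icc (lam 0) (lam (Fin.last n)), 0 < Psi x)
    (i₁ i₂ : Fin (n+1)) (hne : i₁ ≠ i₂)
    (h1 : 0 < p i₁) (h2 : 0 < p i₂) (hsum : p i₁ + p i₂ = 1)
    (hzero : ∀ i, i ≠ i₁ → i ≠ i₂ → p i = 0) :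
    gam lam Psi p + gam lam Psi (Tmap lam Psi p) = lam i₁ + lam i₂ := by
  set l1 := lam i₁ with hl1
  set l2 := lam i₂ with hl2
  have hPsi1 : 0 < Psi l1 :=
    hPsi _ ⟨hmono.monotone (Fin.zero_le _), hmono.monotone (Fin.le_last _)⟩
  have hPsi2 : 0 < Psi l2 :=
    hPsi _ ⟨hmono.monotone (Fin.zero_le _), hmono.monotone (Fin.le_last _)⟩
  have hll : l1 ≠ l2 := fun h => hne (hmono.injective h)
  set a := Psi l1 * p i₁ with hadef
  set b := Psi l2 * p i₂ with hbdef
  have ha : 0 < a := mul_pos hPsi1 h1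
  have hb : 0 < b := mul_pos hPsi2 h2
  have hs : a + b ≠ 0 := by positivity
  -- value of gam p
  have hγ : gam lam Psi p = (l1 * a + l2 * b) / (a + b) := by
    unfold gam
    rw [sum_two_aux hne _ (fun i h h' => by rw [hzero i h h', mul_zero]),
        sum_two_aux hne _ (fun i h h' => by rw [hzero i h h', mul_zero])]
    rw [hadef, hbdef, hl1, hl2]; ring_nf
  set γ := gam lam Psi p with hγdef
  have hd1 : l1 - γ = (l1 - l2) * b / (a + b) := by
    rw [hγ]; field_simp; ring
  have hd2 : l2 - γ = (l2 - l1) * a / (a + b) := by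
    rw [hγ]; field_simp; ring
  -- denominator of Tmap
  have hDsum : ∑ j, (lam j - γ) ^ 2 * p j
      = (l1 - γ) ^ 2 * p i₁ + (l2 - γ) ^ 2 * p i₂ :=
    sum_two_aux hne _ (fun i h h' => by rw [hzero i h h', mul_zero])
  have hllne : l1 - l2 ≠ 0 := sub_ne_zero.mpr hll
  have h1ne : 0 < (l1 - γ) ^ 2 * p i₁ := by
    apply mul_pos _ h1
    rw [hd1]
    positivity
  have h2ne : 0 < (l2 - γ) ^ 2 * p i₂ := by
    apply mul_pos _ h2
    rw [hd2]
    have : l2 - l1 ≠ 0 := sub_ne_zero.mpr (Ne.symm hll)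
    positivity
  -- Tmap vanishes off i₁ i₂
  have hTzero : ∀ i, i ≠ i₁ → i ≠ i₂ → Tmap lam Psi p i = 0 := by
    intro i h h'
    unfold Tmap
    rw [hzero i h h', mul_zero, zero_div]
  have hT1 : Tmap lam Psi p i₁ = (l1 - γ) ^ 2 * p i₁ / ∑ j, (lam j - γ) ^ 2 * p j := rfl
  have hT2 : Tmap lam Psi p i₂ = (l2 - γ) ^ 2 * p i₂ / ∑ j, (lam j - γ) ^ 2 * p j := rfl
  have hγT : gam lam Psi (Tmap lam Psi p) = (l1 * b + l2 * a) / (a + b) := by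
    unfold gam
    rw [sum_two_aux hne _ (fun i h h' => by rw [hTzero i h h', mul_zero]),
        sum_two_aux hne _ (fun i h h' => by rw [hTzero i h h', mul_zero]),
        hT1, hT2, hDsum]
    set D := (l1 - γ) ^ 2 * p i₁ + (l2 - γ) ^ 2 * p i₂ with hDdef
    have hDpos : 0 < D := add_pos h1ne h2ne
    have hDne : D ≠ 0 := hDpos.ne'
    rw [hd1, hd2, hadef, hbdef]
    have hp1 : p i₁ ≠ 0 := h1.ne'
    have hp2 : p i₂ ≠ 0 := h2.ne'
    have hq1 : Psi l1 ≠ 0 := hPsi1.ne'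
    have hq2 : Psi l2 ≠ 0 := hPsi2.ne'
    rw [div_eq_div_iff]
    · field_simp
      ring
    · have h21 : l2 - l1 ≠ 0 := sub_ne_zero.mpr (Ne.symm hll)
      positivity
    · positivity
  rw [hγ, hγT]
  field_simp
  ring
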